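/- For E(t) = E₀ sin(ω₀t) and the Drude-Sommerfeld response, the entropy production Σ(t) = ∫₀ᵗ Σ̇ dt' is nonnegative for all t ≥ 0, where Σ̇ is given by the explicit formula [σ₀E₀² sin(ω₀t')/(1+(ω₀τ)²)]·[ω₀τ e^{-t'/τ} − ω₀τ cos(ω₀t') + sin(ω₀t')]. -/

import Mathlib

open Real intervalIntegral

theorem drude_sommerfeld_entropy_production_nonneg
    (σ₀ E₀ ω₀ τ : ℝ) (hσ : 0 < σ₀) (hE : 0 < E₀) (hω : 0 < ω₀) (hτ : 0 < τ)
    (t : ℝ) (ht : 0 ≤ t) :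
    0 ≤ ∫ t' in (0 : ℝ)..t,
      (σ₀ * E₀ ^ 2 * Real.sin (ω₀ * t') / (1 + (ω₀ * τ) ^ 2)) *
        (ω₀ * τ * Real.exp (-t' / τ) - ω₀ * τ * Real.cos (ω₀ * t') + Real.sin (ω₀ * t')) := by
  have hτ' : τ ≠ 0 := ne_of_gt hτ
  have hd : (1 + (ω₀ * τ) ^ 2) ≠ 0 := by positivity
  set h : ℝ → ℝ := fun s =>
    τ * (Real.sin (ω₀*s) - ω₀*τ*Real.cos (ω₀*s) + ω₀*τ*Real.exp (-s/τ)) / (1 + (ω₀*τ)^2)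
    with hh
  have hcont : Continuous h := by fun_prop
  have hder : ∀ s, HasDerivAt h (Real.sin (ω₀*s) - h s / τ) s := by
    intro s
    have h1 : HasDerivAt (fun x : ℝ => Real.sin (ω₀*x)) (Real.cos (ω₀*s) * ω₀) s := by
      exact HasDerivAt.sin (by simpa using (hasDerivAt_id s).const_mul ω₀)
    have h2 : HasDerivAt (fun x : ℝ => Real.cos (ω₀*x)) (-Real.sin (ω₀*s) * ω₀) s := by
      exact HasDerivAt.cos (by simpa using (hasDerivAt_id s).const_mul ω₀)
    have h3 : HasDerivAt (fun x : ℝ => Real.exp (-x/τ)) (Real.exp (-s/τ) * (-1/τ)) s := by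
      refine HasDerivAt.exp ?_
      exact (hasDerivAt_neg s).div_const τ
    have H : HasDerivAt h
        (τ * (Real.cos (ω₀*s) * ω₀ - ω₀*τ*(-Real.sin (ω₀*s) * ω₀)
          + ω₀*τ*(Real.exp (-s/τ) * (-1/τ))) / (1 + (ω₀*τ)^2)) s := by
      exact (((h1.sub ((h2.const_mul (ω₀*τ)))).add ((h3.const_mul (ω₀*τ)))).const_mul τ).div_const _
    convert H using 1
    simp only [hh]
    field_simp
    ring
  have hf : ∀ s, (σ₀ * E₀ ^ 2 * Real.sin (ω₀ * s) / (1 + (ω₀ * τ) ^ 2)) *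
        (ω₀ * τ * Real.exp (-s / τ) - ω₀ * τ * Real.cos (ω₀ * s) + Real.sin (ω₀ * s))
      = (σ₀ * E₀ ^ 2 / τ) * (h s * (Real.sin (ω₀*s) - h s / τ))
        + (σ₀ * E₀ ^ 2 / τ^2) * (h s)^2 := by
    intro s
    simp only [hh]
    field_simp
    ring
  rw [intervalIntegral.integral_congr (g := fun s => (σ₀ * E₀ ^ 2 / τ) * (h s * (Real.sin (ω₀*s) - h s / τ))
        + (σ₀ * E₀ ^ 2 / τ^2) * (h s)^2) (fun s _ => hf s)]
  have hcont1 : Continuous fun s => (σ₀ * E₀ ^ 2 / τ) * (h s * (Real.sin (ω₀*s) - h s / τ)) := by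
    fun_prop
  have hcont2 : Continuous fun s => (σ₀ * E₀ ^ 2 / τ^2) * (h s)^2 := by fun_prop
  rw [intervalIntegral.integral_add (hcont1.intervalIntegrable _ _) (hcont2.intervalIntegrable _ _)]
  have hFTC : (∫ s in (0:ℝ)..t, h s * (Real.sin (ω₀*s) - h s / τ))
      = (h t)^2/2 - (h 0)^2/2 := by
    have hc3 : Continuous fun s => h s * (Real.sin (ω₀*s) - h s / τ) := by fun_prop
    refine intervalIntegral.integral_eq_sub_of_hasDerivAt (f := fun s => (h s)^2/2) (fun s _ => ?_)
      (hc3.intervalIntegrable _ _)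
    have : HasDerivAt (fun x => h x ^ 2 / 2) ((2:ℕ) * h s ^ 1 * (Real.sin (ω₀*s) - h s / τ) / 2) s :=
      ((hder s).fun_pow 2).div_const 2
    exact this.congr_deriv (by ring)
  have h0 : h 0 = 0 := by simp [hh]
  have part1 : 0 ≤ ∫ s in (0:ℝ)..t,
      (σ₀ * E₀ ^ 2 / τ) * (h s * (Real.sin (ω₀*s) - h s / τ)) := by
    rw [intervalIntegral.integral_const_mul, hFTC, h0]
    norm_num
    positivity
  have part2 : 0 ≤ ∫ s in (0:ℝ)..t, (σ₀ * E₀ ^ 2 / τ^2) * (h s)^2 := by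
    apply intervalIntegral.integral_nonneg ht
    intro s _
    positivity
  linarith
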